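/- arXiv:2209.09479 — 2 statements merged into one kernel-verified Lean document; each statement's English description precedes it below -/
import Mathlib

section
/- Let p be an odd prime, r ≥ 1 an integer, and χ a primitive Dirichlet character modulo p^r. Let ℓ, r₁ ≥ 0 be integers with r₁ < r - ℓ, let q' ≥ 1 be an integer with p ∤ q', and set q = p^{r₁} q'. Let a, b, m ∈ ℤ, and define C(a,b,q,m) := Σ_{β=0}^{p^r q - 1} χ(β) e( -(a+bq)β/(p^ℓ q) + mβ/(p^r q) ), and let τ_χ := Σ_{β=0}^{p^r - 1} χ(β) e(β/p^r) be the Gauss sum of χ. If p^{r₁} exactly divides m (i.e. p^{r₁} | m and p^{r₁+1} ∤ m) and a p^{r-ℓ} ≡ m (mod q'), then C(a,b,q,m) = q · χ(q') · χ̄( (m - (a+bq) p^{r-ℓ})/p^{r₁} ) · τ_χ; in all other cases C(a,b,q,m) = 0. -/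
noncomputable def e (x : ℝ) : ℂ := Complex.exp (2 * (Real.pi : ℂ) * Complex.I * (x : ℂ))

lemma e_int (k : ℤ) : e k = 1 := by
  unfold e
  rw [show 2 * (Real.pi : ℂ) * Complex.I * ((k : ℝ) : ℂ) = (k : ℤ) * (2 * Real.pi * Complex.I) by push_cast; ring,
    Complex.exp_int_mul_two_pi_mul_I]

lemma e_add (x y : ℝ) : e (x + y) = e x * e y := by
  unfold e; rw [← Complex.exp_add]; push_cast; ring_nf

lemma e_pow (x : ℝ) (k : ℕ) : e x ^ k = e (k * x) := by
  unfold e; rw [← Complex.exp_nat_mul]; push_cast; ring_nf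

lemma e_eq_one_iff (M : ℤ) (q : ℕ) (hq : 0 < q) :
    e ((M : ℝ) / (q : ℝ)) = 1 ↔ (q : ℤ) ∣ M := by
  constructor
  · intro h
    unfold e at h
    rw [Complex.exp_eq_one_iff] at h
    obtain ⟨k, hk⟩ := h
    have h2 : (2 * (Real.pi:ℂ) * Complex.I) ≠ 0 := by
      simp [Real.pi_ne_zero, Complex.I_ne_zero]
    have h3 : (((M : ℝ) / q : ℝ) : ℂ) = (k : ℂ) := by
      apply mul_left_cancel₀ h2
      rw [hk]; ring
    have h4 : (M : ℝ) / q = (k : ℝ) := by exact_mod_cast h3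
    have h5 : (M : ℝ) = (k : ℝ) * q := by
      field_simp at h4; linarith [h4]
    refine ⟨k, ?_⟩
    have : (M : ℝ) = ((q * k : ℤ) : ℝ) := by push_cast; linarith
    exact_mod_cast this
  · rintro ⟨k, rfl⟩
    rw [show (((q : ℤ) * k : ℤ) : ℝ) / q = ((k : ℤ) : ℝ) by push_cast; field_simp, e_int]

lemma geom_sum_e (M : ℤ) (q : ℕ) (hq : 0 < q) :
    ∑ v ∈ Finset.range q, e ((M * v : ℤ) / (q : ℝ)) =
      if (q : ℤ) ∣ M then (q : ℂ) else 0 := by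
  have hterm : ∀ v : ℕ, e ((M * v : ℤ) / (q : ℝ)) = e ((M : ℝ) / q) ^ v := by
    intro v; rw [e_pow]; congr 1; push_cast; ring
  simp_rw [hterm]
  by_cases hd : (q : ℤ) ∣ M
  · rw [if_pos hd, (e_eq_one_iff M q hq).2 hd]
    simp
  · rw [if_neg hd, geom_sum_eq (fun h => hd ((e_eq_one_iff M q hq).1 h))]
    have : e ((M : ℝ) / q) ^ q = 1 := by
      rw [e_pow, show (q : ℝ) * ((M:ℝ)/q) = ((M : ℤ) : ℝ) by field_simp, e_int]
    rw [this]; simp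

lemma sum_range_mul_split (n q : ℕ) (hn : 0 < n) (f : ℕ → ℂ) :
    ∑ β ∈ Finset.range (n * q), f β
      = ∑ v ∈ Finset.range q, ∑ u ∈ Finset.range n, f (u + n * v) := by
  rw [← Finset.sum_product']
  apply Finset.sum_nbij' (fun β => (β / n, β % n)) (fun x => x.2 + n * x.1)
  · intro β hβ
    simp only [Finset.mem_range] at hβ
    simp only [Finset.mem_product, Finset.mem_range]
    exact ⟨Nat.div_lt_of_lt_mul hβ, Nat.mod_lt _ hn⟩
  · intro x hx
    simp only [Finset.mem_product, Finset.mem_range] at hx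
    simp only [Finset.mem_range]
    calc x.2 + n * x.1 < n + n * x.1 := by omega
      _ = n * (x.1 + 1) := by ring
      _ ≤ n * q := Nat.mul_le_mul_left n hx.1
  · intro β hβ
    exact Nat.mod_add_div β n
  · intro x hx
    simp only [Finset.mem_product, Finset.mem_range] at hx
    simp [Nat.add_mul_div_left _ _ hn, Nat.div_eq_of_lt hx.2, Nat.add_mul_mod_self_left,
      Nat.mod_eq_of_lt hx.2]
  · intro β hβ
    rw [Nat.mod_add_div β n]

lemma e_eq_stdAddChar (s : ℤ) (n : ℕ) [NeZero n] :
    e ((s : ℝ) / (n : ℝ)) = ZMod.stdAddChar ((s : ZMod n)) := by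
  rw [ZMod.stdAddChar_coe]
  unfold e
  congr 1
  push_cast
  ring

lemma sum_char_e (n : ℕ) [NeZero n] (χ : DirichletCharacter ℂ n) (s : ℤ) :
    ∑ u ∈ Finset.range n, χ ((u : ℤ) : ZMod n) * e (((s * u : ℤ) : ℝ) / (n : ℝ)) =
      gaussSum χ ((ZMod.stdAddChar).mulShift (s : ZMod n)) := by
  rw [gaussSum]
  refine Finset.sum_nbij' (fun u => ((u : ZMod n))) (fun x : ZMod n => x.val) ?_ ?_ ?_ ?_ ?_
  · intro u _; exact Finset.mem_univ _
  · intro x _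
    simp only [Finset.mem_range]
    exact ZMod.val_lt x
  · intro u hu
    simp only [Finset.mem_range] at hu
    exact ZMod.val_cast_of_lt hu
  · intro x _
    exact ZMod.natCast_rightInverse x
  · intro u hu
    have h1 : (((u : ℕ) : ℤ) : ZMod n) = ((u : ZMod n)) := by push_cast; rfl
    have h2 : ((s * (u : ℤ) : ℤ) : ZMod n) = (s : ZMod n) * ((u : ZMod n)) := by
      push_cast; rfl
    rw [h1, e_eq_stdAddChar (s * u) n, h2]
    rfl

/-- **Evaluation of the complete character sum** (Lemma 3.2 of the paper).
For `χ` primitive mod `p^r`, `q = p^{r₁} q'` with `p ∤ q'` and `r₁ + ℓ < r`: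
if `p^{r₁} ∥ m` and `a p^{r-ℓ} ≡ m (mod q')` then
`C(a,b,q,m) = q χ(q') χ̄((m-(a+bq)p^{r-ℓ})/p^{r₁}) τ_χ`, and otherwise `C(a,b,q,m) = 0`. -/
theorem stmt_3
    (p : ℕ) (hp : p.Prime) (hodd : Odd p) (r : ℕ) (hr : 1 ≤ r)
    (χ : DirichletCharacter ℂ (p ^ r)) (hχ : χ.IsPrimitive)
    (ℓ r₁ : ℕ) (hr₁ : r₁ + ℓ < r)
    (q' : ℕ) (hq' : 1 ≤ q') (hpq' : ¬ p ∣ q')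
    (q : ℕ) (hq : q = p ^ r₁ * q')
    (a b m : ℤ)
    (C τ : ℂ)
    (hC : C = ∑ β ∈ Finset.range (p ^ r * q), χ ((β : ℤ) : ZMod (p ^ r)) *
      e (-(((a + b * q) * β : ℤ) : ℝ) / ((p : ℝ) ^ ℓ * q)
          + ((m * β : ℤ) : ℝ) / ((p : ℝ) ^ r * q)))
    (hτ : τ = ∑ β ∈ Finset.range (p ^ r), χ ((β : ℤ) : ZMod (p ^ r)) *
      e ((β : ℝ) / (p : ℝ) ^ r)) :
    (((p : ℤ) ^ r₁ ∣ m ∧ ¬ (p : ℤ) ^ (r₁ + 1) ∣ m ∧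
        a * (p : ℤ) ^ (r - ℓ) ≡ m [ZMOD (q' : ℤ)]) →
      C = (q : ℂ) * χ ((q' : ℤ) : ZMod (p ^ r)) *
        (starRingEnd ℂ)
          (χ ((((m - (a + b * q) * (p : ℤ) ^ (r - ℓ)) / (p : ℤ) ^ r₁ : ℤ)) : ZMod (p ^ r))) * τ)
    ∧ (¬ ((p : ℤ) ^ r₁ ∣ m ∧ ¬ (p : ℤ) ^ (r₁ + 1) ∣ m ∧
        a * (p : ℤ) ^ (r - ℓ) ≡ m [ZMOD (q' : ℤ)]) →
      C = 0) := by
  have hp0 : 0 < p := hp.pos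
  have hn0 : 0 < p ^ r := pow_pos hp0 r
  haveI : NeZero (p ^ r) := ⟨hn0.ne'⟩
  have hq0 : 0 < q := by rw [hq]; positivity
  have hℓr : ℓ ≤ r := by omega
  have hr₁r : r₁ + 1 ≤ r - ℓ := by omega
  set M : ℤ := m - (a + b * q) * (p : ℤ) ^ (r - ℓ) with hM
  -- Step 1: rewrite C as a single exponential sum
  have hC1 : C = ∑ β ∈ Finset.range (p ^ r * q), χ ((β : ℤ) : ZMod (p ^ r)) *
      e (((M * β : ℤ) : ℝ) / (((p ^ r : ℕ) : ℝ) * q)) := by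
    rw [hC]
    refine Finset.sum_congr rfl fun β _ => ?_
    congr 1
    congr 1
    have hpl : ((p : ℝ)) ^ (r - ℓ) * (p : ℝ) ^ ℓ = (p : ℝ) ^ r := by
      rw [← pow_add, Nat.sub_add_cancel hℓr]
    have hpR : (0:ℝ) < (p:ℝ) := by exact_mod_cast hp0
    have hqR : (0:ℝ) < (q:ℝ) := by exact_mod_cast hq0
    rw [hM]
    push_cast
    rw [← hpl]
    field_simp
    ring
  -- Step 2: split the sum
  have hsplit : C = (∑ v ∈ Finset.range q, e (((M * v : ℤ) : ℝ) / (q : ℝ))) *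
      (∑ u ∈ Finset.range (p ^ r), χ ((u : ℤ) : ZMod (p ^ r)) *
        e (((M * u : ℤ) : ℝ) / (((p ^ r : ℕ) : ℝ) * q))) := by
    rw [hC1, sum_range_mul_split _ _ hn0, Finset.sum_mul]
    refine Finset.sum_congr rfl fun v _ => ?_
    rw [Finset.mul_sum]
    refine Finset.sum_congr rfl fun u _ => ?_
    have hchi : (((u + p ^ r * v : ℕ) : ℤ) : ZMod (p ^ r)) = ((u : ℤ) : ZMod (p ^ r)) := by
      push_cast
      have hz : ((p : ZMod (p ^ r))) ^ r = 0 := by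
        rw [← Nat.cast_pow, ZMod.natCast_self]
      simp [hz]
    have hexp : e (((M * (u + p ^ r * v : ℕ) : ℤ) : ℝ) / (((p ^ r : ℕ) : ℝ) * q))
        = e (((M * u : ℤ) : ℝ) / (((p ^ r : ℕ) : ℝ) * q) + ((M * v : ℤ) : ℝ) / (q : ℝ)) := by
      congr 1
      have h1 : ((p ^ r : ℕ) : ℝ) ≠ 0 := by positivity
      have h2 : ((q : ℕ) : ℝ) ≠ 0 := by positivity
      push_cast
      field_simp
    rw [hchi, hexp, e_add]
    ring
  -- Step 3: geometric sum
  have hgeo : (∑ v ∈ Finset.range q, e (((M * v : ℤ) : ℝ) / (q : ℝ)))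
      = if (q : ℤ) ∣ M then (q : ℂ) else 0 := geom_sum_e M q hq0
  -- τ as Gauss sum
  have hτg : τ = gaussSum χ (ZMod.stdAddChar (N := p ^ r)) := by
    rw [hτ]
    have : ∀ β : ℕ, e ((β : ℝ) / (p : ℝ) ^ r) = e ((((1 : ℤ) * β : ℤ) : ℝ) / ((p ^ r : ℕ) : ℝ)) := by
      intro β; congr 1; push_cast; ring
    simp_rw [this]
    rw [sum_char_e (p ^ r) χ 1]
    norm_num
  -- divisibility classification
  have hco : IsCoprime ((p : ℤ) ^ r₁) ((q' : ℕ) : ℤ) := by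
    apply IsCoprime.pow_left
    rw [Int.isCoprime_iff_gcd_eq_one, Int.gcd_natCast_natCast]
    exact hp.coprime_iff_not_dvd.2 hpq'
  have hqInt : (q : ℤ) = (p : ℤ) ^ r₁ * ((q' : ℕ) : ℤ) := by rw [hq]; push_cast; ring
  have hpZ0 : ((p : ℤ)) ≠ 0 := by exact_mod_cast hp0.ne'
  have hdvd' : (p : ℤ) ^ r₁ ∣ (a + b * q) * (p : ℤ) ^ (r - ℓ) :=
    dvd_mul_of_dvd_right (pow_dvd_pow _ (by omega)) _
  have h1 : ((p : ℤ) ^ r₁ ∣ M) ↔ ((p : ℤ) ^ r₁ ∣ m) := by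
    constructor
    · intro h
      have := dvd_add h hdvd'
      rwa [hM, sub_add_cancel] at this
    · intro h
      rw [hM]
      exact dvd_sub h hdvd'
  have hd2 : ((q' : ℕ) : ℤ) ∣ b * q * (p : ℤ) ^ (r - ℓ) := by
    refine dvd_mul_of_dvd_left (dvd_mul_of_dvd_right ?_ b) _
    exact ⟨(p : ℤ) ^ r₁, by rw [hqInt]; ring⟩
  have hMeq : M = (m - a * (p : ℤ) ^ (r - ℓ)) - b * q * (p : ℤ) ^ (r - ℓ) := by
    rw [hM]; ring
  have h2 : (((q' : ℕ) : ℤ) ∣ M) ↔ (a * (p : ℤ) ^ (r - ℓ) ≡ m [ZMOD (q' : ℤ)]) := by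
    rw [Int.modEq_iff_dvd]
    constructor
    · intro h
      have := dvd_add h hd2
      rwa [hMeq, sub_add_cancel] at this
    · intro h
      rw [hMeq]
      exact dvd_sub h hd2
  have hiff : ((q : ℤ) ∣ M) ↔
      ((p : ℤ) ^ r₁ ∣ m ∧ a * (p : ℤ) ^ (r - ℓ) ≡ m [ZMOD (q' : ℤ)]) := by
    rw [hqInt]
    constructor
    · intro h
      exact ⟨h1.1 (dvd_trans (dvd_mul_right _ _) h), h2.1 (dvd_trans (dvd_mul_left _ _) h)⟩
    · rintro ⟨ha, hb⟩
      exact hco.mul_dvd (h1.2 ha) (h2.2 hb)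
  -- the value of C when q ∣ M
  have hCval : ∀ s : ℤ, M = (q : ℤ) * s →
      C = (q : ℂ) * (χ⁻¹ ((s : ZMod (p ^ r))) * τ) := by
    intro s hs
    have hterm : ∀ u : ℕ, e (((M * u : ℤ) : ℝ) / (((p ^ r : ℕ) : ℝ) * q))
        = e (((s * u : ℤ) : ℝ) / ((p ^ r : ℕ) : ℝ)) := by
      intro u
      congr 1
      have h1' : ((p ^ r : ℕ) : ℝ) ≠ 0 := by positivity
      have h2' : ((q : ℕ) : ℝ) ≠ 0 := by positivity
      rw [hs]
      push_cast
      field_simp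
    rw [hsplit]
    simp_rw [hterm]
    rw [hgeo, if_pos ⟨s, hs⟩, sum_char_e, gaussSum_mulShift_of_isPrimitive _ hχ, hτg]
  constructor
  · rintro ⟨hm1, hm2, hm3⟩
    obtain ⟨s, hs⟩ := hiff.2 ⟨hm1, hm3⟩
    rw [hCval s hs]
    have hMdiv : (m - (a + b * q) * (p : ℤ) ^ (r - ℓ)) / (p : ℤ) ^ r₁ = ((q' : ℕ) : ℤ) * s := by
      rw [← hM, hs, hqInt, mul_assoc, Int.mul_ediv_cancel_left _ (pow_ne_zero r₁ hpZ0)]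
    rw [hMdiv]
    have hcast : ((((q' : ℕ) : ℤ) * s : ℤ) : ZMod (p ^ r))
        = (((q' : ℤ)) : ZMod (p ^ r)) * ((s : ZMod (p ^ r))) := by push_cast; rfl
    rw [hcast, map_mul, map_mul, starRingEnd_apply, starRingEnd_apply,
      MulChar.star_apply', MulChar.star_apply']
    have hunit : IsUnit (((q' : ℤ)) : ZMod (p ^ r)) := by
      have : (((q' : ℤ)) : ZMod (p ^ r)) = ((q' : ℕ) : ZMod (p ^ r)) := by push_cast; rfl
      rw [this, ZMod.isUnit_iff_coprime]
      exact (hp.coprime_iff_not_dvd.2 hpq').symm.pow_right r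
    have hone : χ (((q' : ℤ)) : ZMod (p ^ r)) * χ⁻¹ (((q' : ℤ)) : ZMod (p ^ r)) = 1 := by
      rw [MulChar.inv_apply_eq_inv, Ring.mul_inverse_cancel _ (hunit.map χ)]
    linear_combination (-((q : ℕ) : ℂ) * (χ⁻¹ ((s : ZMod (p ^ r)))) * τ) * hone
  · intro hnP
    by_cases hd : (q : ℤ) ∣ M
    · obtain ⟨s, hs⟩ := hd
      rw [hCval s hs]
      have hm13 := hiff.1 ⟨s, hs⟩
      have hm2 : (p : ℤ) ^ (r₁ + 1) ∣ m := by
        by_contra hcon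
        exact hnP ⟨hm13.1, hcon, hm13.2⟩
      have hps : (p : ℤ) ∣ s := by
        have hdM : (p : ℤ) ^ (r₁ + 1) ∣ M := by
          rw [hM]
          exact dvd_sub hm2 (dvd_mul_of_dvd_right (pow_dvd_pow _ (by omega)) _)
        rw [hs, hqInt, mul_assoc, pow_succ] at hdM
        have hppq : (p : ℤ) ∣ ((q' : ℕ) : ℤ) * s :=
          (mul_dvd_mul_iff_left (pow_ne_zero r₁ hpZ0)).1 hdM
        have hpZ : Prime ((p : ℤ)) := Nat.prime_iff_prime_int.mp hp
        refine (hpZ.dvd_mul.1 hppq).resolve_left fun h => hpq' ?_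
        exact_mod_cast h
      obtain ⟨t, rfl⟩ := hps
      have h0 : χ⁻¹ ((((p : ℤ) * t : ℤ)) : ZMod (p ^ r)) = 0 := by
        apply MulChar.map_nonunit
        intro hu
        have hcast2 : ((((p : ℤ) * t : ℤ)) : ZMod (p ^ r))
            = ((p : ZMod (p ^ r))) * ((t : ZMod (p ^ r))) := by push_cast; rfl
        rw [hcast2] at hu
        have hup : IsUnit ((p : ZMod (p ^ r))) := isUnit_of_mul_isUnit_left hu
        haveI : Fact (1 < p ^ r) := ⟨Nat.one_lt_pow (by omega) hp.one_lt⟩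
        have hzz := hup.pow r
        rw [← Nat.cast_pow, ZMod.natCast_self] at hzz
        exact not_isUnit_zero hzz
      rw [h0, zero_mul, mul_zero]
    · rw [hsplit, hgeo, if_neg hd, zero_mul]
end

section
/- For every integer j ≥ 1 and every real A ≥ 1 there exists a constant C = C(j, A) such that the following holds: for every smooth function w : ℝ → ℂ supported in [1,2] with |w^{(i)}(y)| ≤ A for all 0 ≤ i ≤ j and all y ∈ ℝ, and for all real numbers a and b with |b| ≥ 1 and |b| ≥ 4|a|, one has | ∫_ℝ w(y) e( a y + b √y ) dy | ≤ C |b|^{-j}. -/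
open MeasureTheory Set Filter Topology Complex

namespace S4

noncomputable def EE (a b : ℝ) (u : ℝ) : ℂ := e (a * u ^ 2 + b * u)

def zz (a b u : ℝ) : ℝ := 2 * a * u + b

lemma norm_e (x : ℝ) : ‖e x‖ = 1 := by
  rw [e, show (2 * (Real.pi : ℂ) * Complex.I * (x:ℂ)) = ((2*Real.pi*x : ℝ) : ℂ) * Complex.I by push_cast; ring]
  exact Complex.norm_exp_ofReal_mul_I _

lemma hasDerivAt_EE (a b u : ℝ) :
    HasDerivAt (EE a b) (2 * (Real.pi : ℂ) * Complex.I * ((zz a b u : ℝ) : ℂ) * EE a b u) u := by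
  have hpoly : HasDerivAt (fun u : ℝ => a * u ^ 2 + b * u) (zz a b u) u := by
    have h := ((hasDerivAt_pow 2 u).const_mul a).add ((hasDerivAt_id u).const_mul b)
    refine h.congr_deriv ?_
    simp [zz]; ring
  have hc : HasDerivAt (fun u : ℝ => ((a * u ^ 2 + b * u : ℝ) : ℂ)) ((zz a b u : ℝ) : ℂ) u :=
    hpoly.ofReal_comp
  have h2 := (hc.const_mul (2 * (Real.pi : ℂ) * Complex.I)).cexp
  refine h2.congr_deriv ?_
  unfold EE e
  ring

lemma continuous_EE (a b : ℝ) : Continuous (EE a b) := by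
  unfold EE e
  exact Complex.continuous_exp.comp (by fun_prop)


noncomputable def psi (a b : ℝ) (u : ℝ) : ℂ :=
  (2 * (Real.pi : ℂ) * Complex.I * ((zz a b u : ℝ) : ℂ))⁻¹

noncomputable def Psi (a b : ℝ) (n : ℕ) (u : ℝ) : ℂ :=
  (2 * (Real.pi : ℂ) * Complex.I)⁻¹ * (-(2*a) : ℂ) ^ n * (Nat.factorial n : ℂ) *
    ((zz a b u : ℝ) : ℂ) ^ (-(n+1) : ℤ)

variable {a b : ℝ}

lemma zz_lb (hb : 1 ≤ |b|) (hab : 4 * |a| ≤ |b|) {u : ℝ} (hu : |u| ≤ 9/5) :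
    |b| / 10 ≤ |zz a b u| := by
  have h1 : |2*a*u| ≤ 9/10 * |b| := by
    have e1 : |2*a*u| = 2 * |a| * |u| := by
      rw [abs_mul, abs_mul]; norm_num
    rw [e1]
    nlinarith [abs_nonneg a, abs_nonneg u, mul_nonneg (abs_nonneg a) (sub_nonneg.2 hu)]
  have h2 : |b| ≤ |zz a b u| + |2*a*u| := by
    calc |b| = |(2*a*u + b) + (-(2*a*u))| := by ring_nf
    _ ≤ |2*a*u + b| + |(-(2*a*u))| := abs_add_le _ _
    _ = |zz a b u| + |2*a*u| := by rw [abs_neg]; rfl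
  linarith

lemma two_pi_I_ne : (2 * (Real.pi : ℂ) * Complex.I) ≠ 0 := by
  simp [Real.pi_ne_zero, Complex.I_ne_zero, Complex.ofReal_ne_zero]

lemma hasDerivAt_Psi (n : ℕ) {u : ℝ} (hz : zz a b u ≠ 0) :
    HasDerivAt (Psi a b n) (Psi a b (n+1) u) u := by
  have hzz : HasDerivAt (fun u : ℝ => ((zz a b u : ℝ) : ℂ)) ((2*a : ℝ) : ℂ) u := by
    have h : HasDerivAt (fun u : ℝ => zz a b u) (2*a) u := by
      unfold zz
      simpa using ((hasDerivAt_id u).const_mul (2*a)).add_const b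
    exact h.ofReal_comp
  have hz' : ((zz a b u : ℝ) : ℂ) ≠ 0 := by exact_mod_cast hz
  have hzpow := (hasDerivAt_zpow (-(n+1) : ℤ) ((zz a b u : ℝ) : ℂ) (Or.inl hz')).comp u hzz
  have h := hzpow.const_mul ((2 * (Real.pi : ℂ) * Complex.I)⁻¹ * (-(2*a) : ℂ) ^ n * (Nat.factorial n : ℂ))
  refine h.congr_deriv (Eq.symm ?_)
  show Psi a b (n+1) u = _
  unfold Psi
  rw [show ((-(↑n+1) : ℤ) - 1) = (-(↑(n+1)+1) : ℤ) by push_cast; ring]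
  push_cast [Nat.factorial_succ]
  ring

lemma iteratedDeriv_psi (n : ℕ) : ∀ u : ℝ, zz a b u ≠ 0 →
    iteratedDeriv n (psi a b) u = Psi a b n u := by
  induction n with
  | zero =>
    intro u hz
    simp [Psi, psi, mul_inv, zpow_neg, zpow_one, Nat.factorial]
    ring
  | succ n ih =>
    intro u hz
    have hO : IsOpen {x : ℝ | zz a b x ≠ 0} := by
      have : Continuous (zz a b) := by unfold zz; fun_prop
      exact isOpen_compl_singleton.preimage this
    have hev : iteratedDeriv n (psi a b) =ᶠ[𝓝 u] Psi a b n :=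
      eventually_of_mem (hO.mem_nhds hz) (fun x hx => ih x hx)
    rw [iteratedDeriv_succ, hev.deriv_eq, (hasDerivAt_Psi n hz).deriv]

lemma norm_Psi_le (hb : 1 ≤ |b|) (hab : 4 * |a| ≤ |b|) (n : ℕ) {u : ℝ}
    (hu : u ∈ Icc (9/10 : ℝ) (3/2)) :
    ‖Psi a b n u‖ ≤ 10 * (Nat.factorial n) * 5 ^ n / |b| := by
  have hb0 : (0:ℝ) < |b| := lt_of_lt_of_le one_pos hb
  have hz : |b| / 10 ≤ |zz a b u| :=
    zz_lb hb hab (abs_le.2 ⟨by linarith [hu.1], by linarith [hu.2]⟩)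
  have hz0 : (0:ℝ) < |zz a b u| := lt_of_lt_of_le (by positivity) hz
  have hnorm : ‖Psi a b n u‖ = ‖(2 * (Real.pi : ℂ) * Complex.I)⁻¹‖ * ‖(-(2*a) : ℂ)‖^n *
      (Nat.factorial n : ℝ) * (|zz a b u| ^ (n+1))⁻¹ := by
    unfold Psi
    rw [norm_mul, norm_mul, norm_mul, norm_zpow, norm_pow, Complex.norm_real,
      Real.norm_eq_abs, Complex.norm_natCast,
      show (-(↑n+1) : ℤ) = -((n+1 : ℕ) : ℤ) by push_cast; ring, zpow_neg, zpow_natCast]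
  rw [hnorm]
  have h1 : ‖(2 * (Real.pi : ℂ) * Complex.I)⁻¹‖ ≤ 1 := by
    rw [norm_inv]
    have hval : ‖(2 * (Real.pi : ℂ) * Complex.I)‖ = 2 * Real.pi := by
      rw [show (2 * (Real.pi : ℂ) * Complex.I) = ((2*Real.pi : ℝ) : ℂ) * Complex.I by
        push_cast; ring]
      rw [norm_mul, Complex.norm_I, mul_one, Complex.norm_real, Real.norm_eq_abs]
      exact abs_of_nonneg (by positivity)
    rw [hval, inv_le_one_iff₀]
    right; nlinarith [Real.pi_gt_three]
  have h2 : ‖(-(2*a) : ℂ)‖ ≤ |b| / 2 := by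
    rw [norm_neg, show (2*(a:ℂ)) = ((2*a : ℝ) : ℂ) by push_cast; ring, Complex.norm_real,
      Real.norm_eq_abs, abs_mul]
    rw [show |(2:ℝ)| = 2 by norm_num]
    linarith
  have h3 : (|zz a b u| ^ (n+1))⁻¹ ≤ ((|b|/10) ^ (n+1))⁻¹ := by
    apply inv_anti₀ (by positivity)
    exact pow_le_pow_left₀ (by positivity) hz _
  calc ‖(2 * (Real.pi : ℂ) * Complex.I)⁻¹‖ * ‖(-(2*a) : ℂ)‖^n * (Nat.factorial n : ℝ) *
        (|zz a b u| ^ (n+1))⁻¹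
      ≤ 1 * (|b|/2)^n * (Nat.factorial n : ℝ) * ((|b|/10) ^ (n+1))⁻¹ := by
        gcongr <;> positivity
    _ = 10 * (Nat.factorial n) * 5 ^ n / |b| := by
        have hkey : (((|b|/10 : ℝ)) ^ (n+1))⁻¹ = 10 * 10^n / (|b| * |b|^n) := by
          rw [div_pow, inv_div, pow_succ, pow_succ]; ring
        rw [one_mul, hkey, div_pow,
          show (10:ℝ)^n = 5^n * 2^n by rw [← mul_pow]; norm_num]
        have hb' : |b| ≠ 0 := hb0.ne'
        have h2n : (2:ℝ)^n ≠ 0 := by positivity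
        have hbn : |b|^n ≠ 0 := by positivity
        field_simp

noncomputable def cb : ContDiffBump (0 : ℝ) :=
  { rIn := 8/5, rOut := 17/10, rIn_pos := by norm_num, rIn_lt_rOut := by norm_num }

noncomputable def psit (a b : ℝ) (u : ℝ) : ℂ := (cb u : ℝ) • psi a b u

variable {a b : ℝ}

lemma zz_ne (hb : 1 ≤ |b|) (hab : 4 * |a| ≤ |b|) {u : ℝ} (hu : |u| ≤ 9/5) :
    zz a b u ≠ 0 := by
  have h := zz_lb hb hab hu
  have hb0 : (0:ℝ) < |b| := lt_of_lt_of_le one_pos hb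
  intro h0
  rw [h0] at h
  simp at h
  linarith

lemma den_ne (hb : 1 ≤ |b|) (hab : 4 * |a| ≤ |b|) {u : ℝ} (hu : |u| ≤ 9/5) :
    (2 * (Real.pi : ℂ) * Complex.I * ((zz a b u : ℝ) : ℂ)) ≠ 0 :=
  mul_ne_zero two_pi_I_ne (by exact_mod_cast zz_ne hb hab hu)

lemma psit_eq_psi {u : ℝ} (hu : u ∈ Ioo (0:ℝ) (8/5)) : psit a b u = psi a b u := by
  unfold psit
  rw [cb.one_of_mem_closedBall, one_smul]
  rw [Metric.mem_closedBall, Real.dist_eq, sub_zero]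
  show |u| ≤ (8/5 : ℝ)
  rw [abs_of_pos hu.1]
  exact hu.2.le

lemma contDiff_psit (hb : 1 ≤ |b|) (hab : 4 * |a| ≤ |b|) :
    ContDiff ℝ (⊤ : ℕ∞) (psit a b) := by
  rw [contDiff_iff_contDiffAt]
  intro u
  by_cases h : |u| ≤ 9/5
  · refine ContDiffAt.smul (f := fun u => (cb u : ℝ)) (g := psi a b) ?_ ?_
    · exact cb.contDiffAt
    · unfold psi
      have hf : ContDiffAt ℝ (⊤:ℕ∞) (fun u : ℝ => 2*(Real.pi:ℂ)*Complex.I*((zz a b u : ℝ):ℂ)) u := by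
        exact contDiffAt_const.mul (Complex.ofRealCLM.contDiff.comp (by unfold zz; fun_prop :
          ContDiff ℝ (⊤:ℕ∞) (zz a b))).contDiffAt
      exact hf.inv (den_ne hb hab h)
  · have hU : {x : ℝ | 17/10 < |x|} ∈ 𝓝 u := by
      apply IsOpen.mem_nhds
      · exact isOpen_lt continuous_const continuous_abs
      · show (17/10 : ℝ) < |u|
        push_neg at h
        linarith
    apply ContDiffAt.congr_of_eventuallyEq (contDiffAt_const (c := (0:ℂ)))
    filter_upwards [hU] with x hx
    unfold psit
    rw [cb.zero_of_le_dist, zero_smul]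
    rw [Real.dist_eq, sub_zero]
    show (17/10 : ℝ) ≤ |x|
    exact le_of_lt hx

lemma iteratedDeriv_psit_eq (n : ℕ) {u : ℝ} (hu : u ∈ Icc (9/10:ℝ) (3/2)) :
    iteratedDeriv n (psit a b) u = iteratedDeriv n (psi a b) u := by
  have hEq : Set.EqOn (psit a b) (psi a b) (Ioo (0:ℝ) (8/5)) := fun x hx => psit_eq_psi hx
  exact hEq.iteratedDeriv_of_isOpen isOpen_Ioo n ⟨by linarith [hu.1], by linarith [hu.2]⟩

def UU : Set ℝ := Ioo (-1 : ℝ) 1 ∪ {u : ℝ | 2 < u^2}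

lemma isOpen_UU : IsOpen UU :=
  isOpen_Ioo.union (isOpen_lt continuous_const (continuous_pow 2))

lemma abs_le_of_mem (u : ℝ) (hu : u ∈ Icc (9/10:ℝ) (3/2)) : |u| ≤ 9/5 :=
  abs_le.2 ⟨by linarith [hu.1], by linarith [hu.2]⟩

/-- bound on iterated derivatives of psit on the interval -/
lemma norm_iteratedDeriv_psit_le {a b : ℝ} (hb : 1 ≤ |b|) (hab : 4 * |a| ≤ |b|) (n : ℕ)
    {u : ℝ} (hu : u ∈ Icc (9/10:ℝ) (3/2)) :
    ‖iteratedDeriv n (psit a b) u‖ ≤ 10 * (Nat.factorial n) * 5 ^ n / |b| := by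
  rw [iteratedDeriv_psit_eq n hu, iteratedDeriv_psi n u (zz_ne hb hab (abs_le_of_mem u hu))]
  exact norm_Psi_le hb hab n hu

lemma key (j : ℕ) : ∃ C : ℝ, 0 < C ∧ ∀ a b : ℝ, 1 ≤ |b| → 4 * |a| ≤ |b| →
    ∀ (M : ℝ) (v : ℝ → ℂ), ContDiff ℝ (⊤ : ℕ∞) v → (∀ u ∈ UU, v u = 0) →
    (∀ i, i ≤ j → ∀ u ∈ Icc (9/10:ℝ) (3/2), ‖iteratedDeriv i v u‖ ≤ M) →
    ‖∫ u in (9/10:ℝ)..(3/2), v u * EE a b u‖ ≤ C * M / |b| ^ j := by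
  induction j with
  | zero =>
    refine ⟨1, one_pos, ?_⟩
    intro a b hb hab M v hv hvU hvB
    have hM : 0 ≤ M := le_trans (norm_nonneg _) (hvB 0 le_rfl 1 (by norm_num))
    have hbound : ∀ x ∈ Set.uIoc (9/10:ℝ) (3/2), ‖v x * EE a b x‖ ≤ M := by
      intro x hx
      rw [Set.uIoc_of_le (by norm_num)] at hx
      rw [norm_mul]
      have h1 : ‖EE a b x‖ = 1 := norm_e _
      rw [h1, mul_one]
      exact hvB 0 le_rfl x ⟨hx.1.le, hx.2⟩
    calc ‖∫ u in (9/10:ℝ)..(3/2), v u * EE a b u‖ ≤ M * |(3/2:ℝ) - 9/10| :=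
          intervalIntegral.norm_integral_le_of_norm_le_const hbound
    _ ≤ 1 * M / |b| ^ 0 := by
        rw [pow_zero]
        rw [show |(3/2:ℝ) - 9/10| = 3/5 by norm_num]
        linarith
  | succ j IH =>
    obtain ⟨C, hC0, IH⟩ := IH
    set D : ℝ := 10 * (Nat.factorial (j+1)) * 5 ^ (j+1) with hD
    have hD0 : 0 < D := by positivity
    refine ⟨C * (2^(j+1) * D), by positivity, ?_⟩
    intro a b hb hab M v hv hvU hvB
    have hb0 : (0:ℝ) < |b| := lt_of_lt_of_le one_pos hb
    have hM : 0 ≤ M := le_trans (norm_nonneg _) (hvB 0 (by norm_num) 1 (by norm_num))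
    set G : ℝ → ℂ := fun u => v u * psit a b u with hGdef
    have hGsm : ContDiff ℝ (⊤ : ℕ∞) G := hv.mul (contDiff_psit hb hab)
    have hG' : ContDiff ℝ (⊤ : ℕ∞) (deriv G) := (contDiff_infty_iff_deriv.mp hGsm).2
    -- vanishing of deriv G on UU
    have hv1U : ∀ u ∈ UU, deriv G u = 0 := by
      intro u hu
      have hev : G =ᶠ[𝓝 u] (fun _ => (0:ℂ)) := by
        filter_upwards [isOpen_UU.mem_nhds hu] with x hx
        simp [hGdef, hvU x hx]
      rw [hev.deriv_eq, deriv_const]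
    -- derivative bounds for deriv G
    have hv1B : ∀ i, i ≤ j → ∀ u ∈ Icc (9/10:ℝ) (3/2),
        ‖iteratedDeriv i (deriv G) u‖ ≤ 2^(j+1) * D * M / |b| := by
      intro i hi u hu
      rw [show iteratedDeriv i (deriv G) u = iteratedDeriv (i+1) G u by
        rw [iteratedDeriv_succ']]
      have hle : ((i+1 : ℕ) : WithTop ℕ∞) ≤ ((⊤ : ℕ∞) : WithTop ℕ∞) := by
        exact_mod_cast le_top
      calc ‖iteratedDeriv (i+1) G u‖ = ‖iteratedFDeriv ℝ (i+1) G u‖ :=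
            (norm_iteratedFDeriv_eq_norm_iteratedDeriv).symm
      _ ≤ ∑ l ∈ Finset.range (i+2), ((i+1).choose l : ℝ) * ‖iteratedFDeriv ℝ l v u‖ *
            ‖iteratedFDeriv ℝ (i+1-l) (psit a b) u‖ :=
          norm_iteratedFDeriv_mul_le hv (contDiff_psit hb hab) u hle
      _ ≤ ∑ l ∈ Finset.range (i+2), ((i+1).choose l : ℝ) * (M * (D / |b|)) := by
          apply Finset.sum_le_sum
          intro l hl
          rw [mul_assoc]
          apply mul_le_mul_of_nonneg_left _ (by positivity)
          apply mul_le_mul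
          · rw [norm_iteratedFDeriv_eq_norm_iteratedDeriv]
            apply hvB l _ u hu
            have := Finset.mem_range.mp hl
            omega
          · rw [norm_iteratedFDeriv_eq_norm_iteratedDeriv]
            calc ‖iteratedDeriv (i+1-l) (psit a b) u‖ ≤
                  10 * (Nat.factorial (i+1-l)) * 5 ^ (i+1-l) / |b| :=
                norm_iteratedDeriv_psit_le hb hab _ hu
            _ ≤ D / |b| := by
                have hf : (((i+1-l).factorial : ℕ) : ℝ) ≤ (((j+1).factorial : ℕ) : ℝ) := by
                  exact_mod_cast Nat.factorial_le (by omega : i+1-l ≤ j+1)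
                have hp : (5:ℝ)^(i+1-l) ≤ 5^(j+1) :=
                  pow_le_pow_right₀ (by norm_num) (by omega)
                rw [hD]
                gcongr
          · positivity
          · positivity
      _ ≤ 2^(j+1) * D * M / |b| := by
          rw [← Finset.sum_mul]
          have hsum : (∑ l ∈ Finset.range (i+2), ((i+1).choose l : ℝ)) = 2^(i+1) := by
            rw [← Nat.cast_sum]
            norm_cast
            exact Nat.sum_range_choose (i+1)
          rw [hsum]
          rw [div_eq_mul_inv, div_eq_mul_inv]
          have h2 : (2:ℝ)^(i+1) ≤ 2^(j+1) := by
            apply pow_le_pow_right₀ (by norm_num)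
            omega
          have : (2:ℝ)^(i+1) * (M * (D * |b|⁻¹)) ≤ 2^(j+1) * (M * (D * |b|⁻¹)) := by
            apply mul_le_mul_of_nonneg_right h2 (by positivity)
          calc (2:ℝ)^(i+1) * (M * (D / |b|)) = 2^(i+1) * (M * (D * |b|⁻¹)) := by
                rw [div_eq_mul_inv]
          _ ≤ 2^(j+1) * (M * (D * |b|⁻¹)) := this
          _ = 2^(j+1) * D * M * |b|⁻¹ := by ring
    -- integration by parts
    have hcontzz : Continuous (fun u : ℝ => ((zz a b u : ℝ) : ℂ)) :=
      Complex.continuous_ofReal.comp (by unfold zz; fun_prop)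
    have hEq1 : ∫ u in (9/10:ℝ)..(3/2), v u * EE a b u
        = ∫ u in (9/10:ℝ)..(3/2),
            G u * (2*(Real.pi:ℂ)*Complex.I*((zz a b u : ℝ):ℂ) * EE a b u) := by
      apply intervalIntegral.integral_congr
      intro x hx
      rw [Set.uIcc_of_le (by norm_num)] at hx
      have hx0 : x ∈ Ioo (0:ℝ) (8/5) := ⟨by linarith [hx.1], by linarith [hx.2]⟩
      show v x * EE a b x = v x * psit a b x * _
      rw [psit_eq_psi hx0]
      unfold psi
      have hne := den_ne hb hab (abs_le_of_mem x hx)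
      have hz' : ((zz a b x : ℝ) : ℂ) ≠ 0 := by exact_mod_cast zz_ne hb hab (abs_le_of_mem x hx)
      field_simp
    have hG9 : G (9/10) = 0 := by
      have h9 : (9/10:ℝ) ∈ UU := Or.inl (by constructor <;> norm_num)
      show v (9/10) * psit a b (9/10) = 0
      rw [hvU _ h9, zero_mul]
    have hG3 : G (3/2) = 0 := by
      have h3 : (3/2:ℝ) ∈ UU := Or.inr (by norm_num)
      show v (3/2) * psit a b (3/2) = 0
      rw [hvU _ h3, zero_mul]
    have hone : (1 : WithTop ℕ∞) ≤ ((⊤:ℕ∞) : WithTop ℕ∞) := by exact_mod_cast le_top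
    have hIBP := intervalIntegral.integral_mul_deriv_eq_deriv_mul
      (a := (9/10:ℝ)) (b := (3/2:ℝ)) (u := G) (u' := deriv G) (v := EE a b)
      (v' := fun u => 2*(Real.pi:ℂ)*Complex.I*((zz a b u : ℝ):ℂ) * EE a b u)
      (fun x _ => ((hGsm.differentiable (by simp)) x).hasDerivAt)
      (fun x _ => hasDerivAt_EE a b x)
      ((hG'.continuous).intervalIntegrable _ _)
      (Continuous.intervalIntegrable
        ((continuous_const.mul hcontzz).mul (continuous_EE a b)) _ _)
    have hfinal : ∫ u in (9/10:ℝ)..(3/2), v u * EE a b u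
        = -∫ u in (9/10:ℝ)..(3/2), deriv G u * EE a b u := by
      rw [hEq1, hIBP, hG9, hG3]
      simp
    rw [hfinal, norm_neg]
    have hIHapp := IH a b hb hab (2^(j+1) * D * M / |b|) (deriv G) hG' hv1U hv1B
    have hbj : |b| ^ j ≠ 0 := by positivity
    have hbne : |b| ≠ 0 := hb0.ne'
    calc ‖∫ u in (9/10:ℝ)..(3/2), deriv G u * EE a b u‖
        ≤ C * (2^(j+1) * D * M / |b|) / |b| ^ j := hIHapp
    _ = C * (2^(j+1) * D) * M / |b| ^ (j+1) := by
        rw [pow_succ]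
        field_simp
        ring

lemma itd_const {F : Type*} [NormedAddCommGroup F] [NormedSpace ℝ F] (m : ℕ) (c : F) :
    iteratedDeriv (m+1) (fun _ : ℝ => c) = fun _ => 0 := by
  induction m with
  | zero => rw [iteratedDeriv_one]; exact deriv_const' c
  | succ m ih => rw [iteratedDeriv_succ, ih]; funext x; simp

lemma deriv_sq : deriv (fun x : ℝ => x^2) = fun x => 2*x := by
  funext x; simpa using (hasDerivAt_pow 2 x).deriv

lemma deriv_two_mul : deriv (fun x : ℝ => 2*x) = fun _ => (2:ℝ) := by
  funext x; simpa using ((hasDerivAt_id x).const_mul (2:ℝ)).deriv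

lemma f1_hasDeriv (x : ℝ) : HasDerivAt (fun u : ℝ => ((2*u : ℝ) : ℂ)) (((2:ℝ)):ℂ) x := by
  apply HasDerivAt.ofReal_comp
  simpa using (hasDerivAt_id x).const_mul (2:ℝ)

lemma deriv_f1 : deriv (fun u : ℝ => ((2*u : ℝ) : ℂ)) = fun _ => ((2:ℝ):ℂ) := by
  funext x; exact (f1_hasDeriv x).deriv


end S4

/-- **Non-stationary phase estimate** (used to truncate the dual sum after Voronoi
summation, Lemma 3.4): for `w` smooth supported in `[1,2]` with derivatives up to
order `j` bounded by `A`, and reals `a, b` with `|b| ≥ 1`, `|b| ≥ 4|a|`,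
`|∫ w(y) e(ay + b√y) dy| ≤ C |b|^{-j}` with `C = C(j,A)`. -/
theorem stmt_4 (j : ℕ) (hj : 1 ≤ j) (A : ℝ) (hA : 1 ≤ A) :
    ∃ C : ℝ, 0 < C ∧
      ∀ (w : ℝ → ℂ), (∀ i : ℕ, ContDiff ℝ i w) → Function.support w ⊆ Set.Icc 1 2 →
      (∀ i : ℕ, i ≤ j → ∀ y : ℝ, ‖iteratedDeriv i w y‖ ≤ A) →
      ∀ a b : ℝ, 1 ≤ |b| → 4 * |a| ≤ |b| →
      ‖∫ y : ℝ, w y * e (a * y + b * Real.sqrt y)‖ ≤ C / |b| ^ j := by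
  obtain ⟨C, hC0, hkey⟩ := S4.key j
  have hA0 : (0:ℝ) < A := lt_of_lt_of_le one_pos hA
  set Kv : ℝ := 2^j * 3 * (Nat.factorial j) * 3^j with hKv
  have hKv0 : 0 < Kv := by positivity
  refine ⟨C * (A * Kv), by positivity, ?_⟩
  intro w hw hsupp hwB a b hb hab
  have hwz : ∀ y : ℝ, y ∉ Icc (1:ℝ) 2 → w y = 0 := by
    intro y hy
    by_contra h0
    exact hy (hsupp h0)
  have hwsm : ContDiff ℝ (⊤ : ℕ∞) w := contDiff_infty.mpr hw
  set V : ℝ → ℂ := fun u => ((2*u : ℝ) : ℂ) * w (u^2) with hV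
  have hmul : ContDiff ℝ (⊤ : ℕ∞) (fun u : ℝ => 2*u) := contDiff_const.mul contDiff_id
  have hf1sm : ContDiff ℝ (⊤ : ℕ∞) (fun u : ℝ => ((2*u : ℝ) : ℂ)) :=
    Complex.ofRealCLM.contDiff.comp hmul
  have hsq : ContDiff ℝ (⊤ : ℕ∞) (fun x : ℝ => x ^ 2) := by
    have h : ContDiff ℝ (⊤ : ℕ∞) (id : ℝ → ℝ) := contDiff_id
    exact h.pow 2
  have hNle : ((j:ℕ) : WithTop ℕ∞) ≤ ((⊤:ℕ∞) : WithTop ℕ∞) := by exact_mod_cast le_top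
  have hg1sm : ContDiff ℝ (⊤ : ℕ∞) (fun u : ℝ => w (u^2)) := hwsm.comp hsq
  have hVsm : ContDiff ℝ (⊤ : ℕ∞) V := hf1sm.mul hg1sm
  have hVU : ∀ u ∈ S4.UU, V u = 0 := by
    intro u hu
    have hz : w (u^2) = 0 := by
      rcases hu with h | h
      · exact hwz _ (fun hc => by nlinarith [h.1, h.2, hc.1])
      · exact hwz _ (fun hc => by simp only [Set.mem_setOf_eq] at h; linarith [hc.2])
    show ((2*u : ℝ) : ℂ) * w (u^2) = 0
    rw [hz, mul_zero]
  -- bounds on iterated derivatives of the factors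
  have hf1B : ∀ (l : ℕ) (u : ℝ), u ∈ Icc (9/10:ℝ) (3/2) →
      ‖iteratedFDeriv ℝ l (fun u : ℝ => ((2*u : ℝ) : ℂ)) u‖ ≤ 3 := by
    intro l u hu
    rw [norm_iteratedFDeriv_eq_norm_iteratedDeriv]
    match l with
    | 0 =>
      rw [iteratedDeriv_zero, Complex.norm_real, Real.norm_eq_abs, abs_mul]
      rw [show |(2:ℝ)| = 2 by norm_num, _root_.abs_of_nonneg (by linarith [hu.1] : (0:ℝ) ≤ u)]
      linarith [hu.2]
    | 1 =>
      rw [iteratedDeriv_one, S4.deriv_f1]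
      simp
      norm_num
    | (l+2) =>
      rw [iteratedDeriv_succ', S4.deriv_f1, S4.itd_const]
      simp
  have hg1B : ∀ (m : ℕ), m ≤ j → ∀ u ∈ Icc (9/10:ℝ) (3/2),
      ‖iteratedFDeriv ℝ m (fun u : ℝ => w (u^2)) u‖ ≤ (Nat.factorial m) * A * 3^m := by
    intro m hm u hu
    have hcomp : (fun u : ℝ => w (u^2)) = w ∘ (fun x : ℝ => x^2) := rfl
    rw [hcomp]
    apply norm_iteratedFDeriv_comp_le (hw j) (hsq.of_le hNle) (by exact_mod_cast hm) u
    · intro i him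
      rw [norm_iteratedFDeriv_eq_norm_iteratedDeriv]
      exact hwB i (le_trans him hm) _
    · intro i hi1 him
      rw [norm_iteratedFDeriv_eq_norm_iteratedDeriv]
      match i with
      | 1 =>
        rw [iteratedDeriv_one, S4.deriv_sq]
        rw [Real.norm_eq_abs, abs_mul, show |(2:ℝ)| = 2 by norm_num,
          _root_.abs_of_nonneg (by linarith [hu.1] : (0:ℝ) ≤ u)]
        rw [pow_one]
        linarith [hu.2]
      | 2 =>
        rw [iteratedDeriv_succ, iteratedDeriv_one, S4.deriv_sq, S4.deriv_two_mul]
        norm_num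
      | (i+3) =>
        rw [iteratedDeriv_succ', S4.deriv_sq, iteratedDeriv_succ', S4.deriv_two_mul,
          S4.itd_const]
        simp
  -- bound for V
  have hVB : ∀ i, i ≤ j → ∀ u ∈ Icc (9/10:ℝ) (3/2), ‖iteratedDeriv i V u‖ ≤ A * Kv := by
    intro i hi u hu
    have hle : ((i : ℕ) : WithTop ℕ∞) ≤ ((⊤ : ℕ∞) : WithTop ℕ∞) := by exact_mod_cast le_top
    calc ‖iteratedDeriv i V u‖ = ‖iteratedFDeriv ℝ i V u‖ :=
          (norm_iteratedFDeriv_eq_norm_iteratedDeriv).symm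
    _ ≤ ∑ l ∈ Finset.range (i+1), (i.choose l : ℝ) *
          ‖iteratedFDeriv ℝ l (fun u : ℝ => ((2*u : ℝ) : ℂ)) u‖ *
          ‖iteratedFDeriv ℝ (i-l) (fun u : ℝ => w (u^2)) u‖ :=
        norm_iteratedFDeriv_mul_le hf1sm hg1sm u hle
    _ ≤ ∑ l ∈ Finset.range (i+1), (i.choose l : ℝ) * (3 * ((Nat.factorial j) * A * 3^j)) := by
        apply Finset.sum_le_sum
        intro l hl
        rw [mul_assoc]
        apply mul_le_mul_of_nonneg_left _ (by positivity)
        apply mul_le_mul (hf1B l u hu)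
        · calc ‖iteratedFDeriv ℝ (i-l) (fun u : ℝ => w (u^2)) u‖
              ≤ (Nat.factorial (i-l)) * A * 3^(i-l) := hg1B _ (by omega) u hu
          _ ≤ (Nat.factorial j) * A * 3^j := by
              have hf : (((i-l).factorial : ℕ) : ℝ) ≤ ((j.factorial : ℕ) : ℝ) := by
                exact_mod_cast Nat.factorial_le (by omega : i-l ≤ j)
              have hp : (3:ℝ)^(i-l) ≤ 3^j := pow_le_pow_right₀ (by norm_num) (by omega)
              have h1 : (0:ℝ) ≤ A := hA0.le
              gcongr
        · positivity
        · norm_num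
    _ ≤ A * Kv := by
        rw [← Finset.sum_mul]
        have hsum : (∑ l ∈ Finset.range (i+1), (i.choose l : ℝ)) = 2^i := by
          rw [← Nat.cast_sum]
          norm_cast
          exact Nat.sum_range_choose i
        rw [hsum, hKv]
        have h2 : (2:ℝ)^i ≤ 2^j := pow_le_pow_right₀ (by norm_num) hi
        have hrest : (0:ℝ) ≤ 3 * ((Nat.factorial j) * A * 3^j) := by positivity
        calc (2:ℝ)^i * (3 * ((Nat.factorial j) * A * 3^j))
            ≤ 2^j * (3 * ((Nat.factorial j) * A * 3^j)) :=
              mul_le_mul_of_nonneg_right h2 hrest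
        _ = A * (2^j * 3 * (Nat.factorial j) * 3^j) := by ring
  -- integral chain
  set g : ℝ → ℂ := fun y => w y * e (a*y + b*Real.sqrt y) with hgdef
  have hgsupp : Function.support g ⊆ Ioc (81/100 : ℝ) (9/4) := by
    intro x hx
    have hxw : w x ≠ 0 := by
      intro h0
      apply hx
      show w x * _ = 0
      rw [h0, zero_mul]
    have hmem := hsupp hxw
    exact ⟨by linarith [hmem.1], by linarith [hmem.2]⟩
  have hgcont : Continuous g := by
    apply Continuous.mul (hw 0).continuous
    unfold e
    exact Complex.continuous_exp.comp
      (continuous_const.mul (Complex.continuous_ofReal.comp (by fun_prop)))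
  have h1 : ∫ y : ℝ, g y = ∫ y in (81/100:ℝ)..(9/4), g y := by
    rw [intervalIntegral.integral_of_le (by norm_num)]
    rw [← integral_indicator measurableSet_Ioc]
    rw [indicator_eq_self.mpr hgsupp]
  have h2 : ∫ y in (81/100:ℝ)..(9/4), g y = ∫ x in (9/10:ℝ)..(3/2), (2*x) • g (x^2) := by
    have hder : ∀ x ∈ uIcc (9/10:ℝ) (3/2), HasDerivAt (fun x : ℝ => x^2) (2*x) x :=
      fun x _ => by simpa using hasDerivAt_pow 2 x
    have hsub := intervalIntegral.integral_comp_smul_deriv hder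
      ((by fun_prop : Continuous (fun x : ℝ => 2*x)).continuousOn) hgcont
    rw [show ((9/10:ℝ))^2 = 81/100 by norm_num, show ((3/2:ℝ))^2 = 9/4 by norm_num] at hsub
    exact hsub.symm
  have h3 : ∫ x in (9/10:ℝ)..(3/2), (2*x) • g (x^2) =
      ∫ x in (9/10:ℝ)..(3/2), V x * S4.EE a b x := by
    apply intervalIntegral.integral_congr
    intro x hx
    rw [uIcc_of_le (by norm_num)] at hx
    have hx0 : (0:ℝ) ≤ x := by linarith [hx.1]
    show (2*x) • (w (x^2) * e (a*x^2 + b*Real.sqrt (x^2))) = ((2*x : ℝ) : ℂ) * w (x^2) * S4.EE a b x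
    rw [Real.sqrt_sq hx0, Complex.real_smul, mul_assoc]
    rfl
  rw [h1, h2, h3]
  exact hkey a b hb hab (A * Kv) V hVsm hVU hVB
end
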